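/- In the circular parking model with n places and n−1 cars, for every k with 1 ≤ k ≤ n−1 the conditional second moment of R_{k,n} given L_{k,n} is at most (n − L_{k,n})²/(n − k); equivalently, for every integer l, E[ R_{k,n}² · 1_{L_{k,n} = l} ] ≤ ((n − l)²/(n − k)) · P(L_{k,n} = l). -/

import Mathlib

open scoped BigOperators
open Classical Filter Topology

noncomputable section

namespace Parking

/-- The first empty place reached going clockwise from `t` (including `t` itself),
given the set `S` of occupied places. -/
def firstFree {n : ℕ} (S : Finset (ZMod n)) (t : ZMod n) : ZMod n :=
  if h : ∃ i : ℕ, t + (i : ZMod n) ∉ S then t + ((Nat.find h : ℕ) : ZMod n) else t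

/-- `occ t j` : the set of places occupied after the first `j` cars (with first tries
`t 0, …, t (j-1)`) have parked. -/
def occ {n : ℕ} (t : ℕ → ZMod n) : ℕ → Finset (ZMod n)
  | 0 => ∅
  | j + 1 => insert (firstFree (occ t j) (t j)) (occ t j)

/-- The place filled by car `j+1` (0-indexed `j`). -/
def spot {n : ℕ} (t : ℕ → ZMod n) (j : ℕ) : ZMod n :=
  firstFree (occ t j) (t j)

/-- The size of the block whose empty place is `e`, in the configuration with occupied
set `S`: the empty place `e` together with the maximal run of occupied places
immediately preceding it clockwise. -/
def blockSize {n : ℕ} (S : Finset (ZMod n)) (e : ZMod n) : ℕ :=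
  if h : ∃ i : ℕ, e - ((i + 1 : ℕ) : ZMod n) ∉ S then Nat.find h + 1 else 0

/-- The next empty place strictly after `e` clockwise, for occupied set `S`. -/
def nextEmpty {n : ℕ} (S : Finset (ZMod n)) (e : ZMod n) : ZMod n :=
  if h : ∃ i : ℕ, e + ((i + 1 : ℕ) : ZMod n) ∉ S then e + ((Nat.find h + 1 : ℕ) : ZMod n) else e

/-- `L_{j,n}` (1-indexed `j`): the size, just before car `j` parks, of the block whose
empty place is the place `v_j` filled by car `j`. -/
def Lsize {n : ℕ} (t : ℕ → ZMod n) (j : ℕ) : ℕ :=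
  blockSize (occ t (j - 1)) (spot t (j - 1))

/-- `R_{j,n}` (1-indexed `j`): the size, just before car `j` parks, of the block
immediately following (clockwise) the block whose empty place is `v_j`. -/
def Rsize {n : ℕ} (t : ℕ → ZMod n) (j : ℕ) : ℕ :=
  blockSize (occ t (j - 1)) (nextEmpty (occ t (j - 1)) (spot t (j - 1)))

/-- `D_{j,n}` (1-indexed `j`): the displacement of car `j`, i.e. `((v_j - t_j) mod n) + 1`. -/
def Dsize {n : ℕ} (t : ℕ → ZMod n) (j : ℕ) : ℕ :=
  (spot t (j - 1) - t (j - 1)).val + 1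

/-- Extend a finite try-sequence `t : Fin k → Fin n` into a function `ℕ → ZMod n`. -/
def extend (n k : ℕ) (t : Fin k → Fin n) : ℕ → ZMod n :=
  fun j => if h : j < k then ((t ⟨j, h⟩ : ℕ) : ZMod n) else 0

/-- Expectation, under the uniform measure on try-sequences `{0,…,n-1}^k`,
of a real functional of the parking process with `n` places and `k` cars. -/
def expect (n k : ℕ) (X : (ℕ → ZMod n) → ℝ) : ℝ :=
  (∑ t : Fin k → Fin n, X (extend n k t)) / (n : ℝ) ^ k

/-- Probability, under the uniform measure on try-sequences `{0,…,n-1}^k`, of an event. -/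
def prob (n k : ℕ) (P : (ℕ → ZMod n) → Prop) : ℝ :=
  expect n k (fun t => if P t then 1 else 0)

/-- The solution of the additive Smoluchowski equation with monodisperse initial data. -/
def q (k : ℕ) (t : ℝ) : ℝ :=
  ((k : ℝ) * (1 - Real.exp (-t))) ^ (k - 1) * Real.exp (-t) *
    Real.exp (-((k : ℝ) * (1 - Real.exp (-t)))) / (Nat.factorial k)

/-- `emptyPlace S e i`: the `i`-th empty place clockwise starting from `e` (which is
assumed empty), for occupied set `S`. -/
def emptyPlace {n : ℕ} (S : Finset (ZMod n)) (e : ZMod n) : ℕ → ZMod n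
  | 0 => e
  | i + 1 => nextEmpty S (emptyPlace S e i)


/-! ### Auxiliary lemmas -/

section Aux
set_option linter.unusedSectionVars false
variable {n : ℕ}

/-- characterization of `firstFree` -/
lemma firstFree_eq_of {S : Finset (ZMod n)} {p : ZMod n} {d : ℕ}
    (hmem : ∀ w, w < d → p + (w : ZMod n) ∈ S) (hout : p + (d : ZMod n) ∉ S) :
    firstFree S p = p + (d : ZMod n) := by
  have h : ∃ i : ℕ, p + (i : ZMod n) ∉ S := ⟨d, hout⟩
  have h1 : Nat.find h ≤ d := Nat.find_le hout
  have h2 : ¬ Nat.find h < d := fun hl => Nat.find_spec h (hmem _ hl)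
  have : Nat.find h = d := by omega
  rw [firstFree, dif_pos h, this]

variable [NeZero n]

lemma cast_nat_inj {a b : ℕ} (ha : a < n) (hb : b < n) (h : (a : ZMod n) = (b : ZMod n)) :
    a = b := by
  have := congrArg ZMod.val h
  rwa [ZMod.val_cast_of_lt ha, ZMod.val_cast_of_lt hb] at this

lemma exists_firstFree {S : Finset (ZMod n)} (hne : ∃ q : ZMod n, q ∉ S) (p : ZMod n) :
    ∃ d : ℕ, d < n ∧ (∀ w, w < d → p + (w : ZMod n) ∈ S) ∧ p + (d : ZMod n) ∉ S ∧
      firstFree S p = p + (d : ZMod n) := by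
  obtain ⟨q, hq⟩ := hne
  have hw : ∃ d : ℕ, d < n ∧ p + (d : ZMod n) ∉ S := by
    refine ⟨(q - p).val, ZMod.val_lt _, ?_⟩
    rw [ZMod.natCast_rightInverse (q - p)]
    simpa using hq
  have hex : ∃ d : ℕ, p + (d : ZMod n) ∉ S := ⟨hw.choose, hw.choose_spec.2⟩
  have hmem : ∀ w, w < Nat.find hex → p + (w : ZMod n) ∈ S := by
    intro w hwlt
    by_contra hm
    exact Nat.find_min hex hwlt hm
  exact ⟨Nat.find hex, lt_of_le_of_lt (Nat.find_le hw.choose_spec.2) hw.choose_spec.1,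
    hmem, Nat.find_spec hex, firstFree_eq_of hmem (Nat.find_spec hex)⟩

lemma firstFree_not_mem {S : Finset (ZMod n)} (hne : ∃ q : ZMod n, q ∉ S) (p : ZMod n) :
    firstFree S p ∉ S := by
  obtain ⟨d, _, _, hout, heq⟩ := exists_firstFree hne p
  rw [heq]; exact hout

/-- monotonicity: the first-free index for a subset is no later -/
lemma firstFree_index_le {O S : Finset (ZMod n)} (hOS : O ⊆ S) {p : ZMod n} {dO dS : ℕ}
    (hmemO : ∀ w, w < dO → p + (w : ZMod n) ∈ O) (houtS : p + (dS : ZMod n) ∉ S) :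
    dO ≤ dS := by
  by_contra h
  exact houtS (hOS (hmemO dS (by omega)))

/-- characterization of `blockSize` -/
lemma blockSize_eq_of {S : Finset (ZMod n)} {e : ZMod n} {d : ℕ} (hd : 1 ≤ d)
    (hmem : ∀ w, 1 ≤ w → w < d → e - (w : ZMod n) ∈ S) (hout : e - (d : ZMod n) ∉ S) :
    blockSize S e = d := by
  have h : ∃ i : ℕ, e - ((i + 1 : ℕ) : ZMod n) ∉ S := ⟨d - 1, by
    have : ((d - 1 + 1 : ℕ) : ZMod n) = (d : ZMod n) := by congr 1; omega
    rw [this]; exact hout⟩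
  have h1 : Nat.find h ≤ d - 1 := Nat.find_le (by
    have : ((d - 1 + 1 : ℕ) : ZMod n) = (d : ZMod n) := by congr 1; omega
    rw [this]; exact hout)
  have h2 : ¬ Nat.find h < d - 1 := by
    intro hl
    exact Nat.find_spec h (hmem (Nat.find h + 1) (by omega) (by omega))
  rw [blockSize, dif_pos h]
  omega

/-- characterization of `nextEmpty` -/
lemma nextEmpty_eq_of {S : Finset (ZMod n)} {e : ZMod n} {d : ℕ} (hd : 1 ≤ d)
    (hmem : ∀ w, 1 ≤ w → w < d → e + (w : ZMod n) ∈ S) (hout : e + (d : ZMod n) ∉ S) :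
    nextEmpty S e = e + (d : ZMod n) := by
  have h : ∃ i : ℕ, e + ((i + 1 : ℕ) : ZMod n) ∉ S := ⟨d - 1, by
    have : ((d - 1 + 1 : ℕ) : ZMod n) = (d : ZMod n) := by congr 1; omega
    rw [this]; exact hout⟩
  have h1 : Nat.find h ≤ d - 1 := Nat.find_le (by
    have : ((d - 1 + 1 : ℕ) : ZMod n) = (d : ZMod n) := by congr 1; omega
    rw [this]; exact hout)
  have h2 : ¬ Nat.find h < d - 1 := by
    intro hl
    exact Nat.find_spec h (hmem (Nat.find h + 1) (by omega) (by omega))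
  rw [nextEmpty, dif_pos h]
  congr 2
  omega

end Aux

section Aux2
set_option linter.unusedSectionVars false
variable {n : ℕ} [NeZero n]

/-- The clockwise distance from `e` to the next strictly-later empty place. -/
def gap {n : ℕ} (S : Finset (ZMod n)) (e : ZMod n) : ℕ :=
  if h : ∃ i : ℕ, e + ((i + 1 : ℕ) : ZMod n) ∉ S then Nat.find h + 1 else 0

lemma gap_eq_of {S : Finset (ZMod n)} {e : ZMod n} {d : ℕ} (hd : 1 ≤ d)
    (hmem : ∀ w, 1 ≤ w → w < d → e + (w : ZMod n) ∈ S) (hout : e + (d : ZMod n) ∉ S) :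
    gap S e = d := by
  have h : ∃ i : ℕ, e + ((i + 1 : ℕ) : ZMod n) ∉ S := ⟨d - 1, by
    have : ((d - 1 + 1 : ℕ) : ZMod n) = (d : ZMod n) := by congr 1; omega
    rw [this]; exact hout⟩
  have h1 : Nat.find h ≤ d - 1 := Nat.find_le (by
    have : ((d - 1 + 1 : ℕ) : ZMod n) = (d : ZMod n) := by congr 1; omega
    rw [this]; exact hout)
  have h2 : ¬ Nat.find h < d - 1 := by
    intro hl
    exact Nat.find_spec h (hmem (Nat.find h + 1) (by omega) (by omega))
  rw [gap, dif_pos h]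
  omega

lemma gap_exists {S : Finset (ZMod n)} (hne : ∃ q : ZMod n, q ∉ S) (e : ZMod n) :
    ∃ i : ℕ, i + 1 ≤ n ∧ e + ((i + 1 : ℕ) : ZMod n) ∉ S := by
  obtain ⟨q, hq⟩ := hne
  by_cases hqe : q = e
  · exact ⟨n - 1, by have := NeZero.pos n; omega, by
      have : ((n - 1 + 1 : ℕ) : ZMod n) = (0 : ZMod n) := by
        have : (n - 1 + 1 : ℕ) = n := by have := NeZero.pos n; omega
        rw [this, ZMod.natCast_self]
      rw [this, add_zero, ← hqe]; exact hq⟩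
  · refine ⟨(q - e).val - 1, by have := ZMod.val_lt (q - e); omega, ?_⟩
    have hv : (q - e).val ≠ 0 := by
      intro h0
      exact hqe (by
        have := ZMod.natCast_rightInverse (q - e)
        rw [h0] at this
        simp at this
        rw [← sub_eq_zero]; exact this.symm ▸ this)
    have : (((q - e).val - 1 + 1 : ℕ) : ZMod n) = q - e := by
      have : ((q - e).val - 1 + 1 : ℕ) = (q - e).val := by omega
      rw [this, ZMod.natCast_rightInverse]
    rw [this]
    simpa using hq

lemma gap_spec {S : Finset (ZMod n)} (hne : ∃ q : ZMod n, q ∉ S) (e : ZMod n) :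
    1 ≤ gap S e ∧ gap S e ≤ n ∧
      (∀ w, 1 ≤ w → w < gap S e → e + (w : ZMod n) ∈ S) ∧
      e + ((gap S e : ℕ) : ZMod n) ∉ S := by
  obtain ⟨i0, hi0n, hi0⟩ := gap_exists hne e
  have h : ∃ i : ℕ, e + ((i + 1 : ℕ) : ZMod n) ∉ S := ⟨i0, hi0⟩
  have hfind : Nat.find h ≤ i0 := Nat.find_le hi0
  have hup : gap S e = Nat.find h + 1 := by rw [gap, dif_pos h]
  refine ⟨by omega, by omega, ?_, ?_⟩
  · intro w hw1 hwlt
    by_contra hm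
    have : e + ((w - 1 + 1 : ℕ) : ZMod n) ∉ S := by
      have : (w - 1 + 1 : ℕ) = w := by omega
      rw [this]; exact hm
    have hfl : Nat.find h ≤ w - 1 := Nat.find_le this
    omega
  · have := Nat.find_spec h
    have heq : ((Nat.find h + 1 : ℕ) : ZMod n) = ((gap S e : ℕ) : ZMod n) := by rw [hup]
    rwa [heq] at this

lemma gap_le_of {S : Finset (ZMod n)} (hne : ∃ q : ZMod n, q ∉ S) {e : ZMod n} {w : ℕ}
    (hw : 1 ≤ w) (hout : e + (w : ZMod n) ∉ S) : gap S e ≤ w := by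
  obtain ⟨h1, _, hmem, _⟩ := gap_spec hne e
  by_contra hlt
  exact hout (hmem w hw (by omega))

/-! ### occ lemmas -/

lemma occ_zero (t : ℕ → ZMod n) : occ t 0 = ∅ := rfl
lemma occ_succ (t : ℕ → ZMod n) (j : ℕ) :
    occ t (j + 1) = insert (spot t j) (occ t j) := rfl

lemma occ_subset_succ (t : ℕ → ZMod n) (j : ℕ) : occ t j ⊆ occ t (j + 1) :=
  Finset.subset_insert _ _

lemma occ_subset (t : ℕ → ZMod n) {i j : ℕ} (h : i ≤ j) : occ t i ⊆ occ t j := by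
  induction j with
  | zero =>
    have : i = 0 := by omega
    subst this; exact Finset.Subset.refl _
  | succ j ih =>
    rcases Nat.lt_or_ge i (j+1) with h'|h'
    · exact Finset.Subset.trans (ih (by omega)) (occ_subset_succ t j)
    · have : i = j + 1 := by omega
      subst this; exact Finset.Subset.refl _

lemma occ_card (t : ℕ → ZMod n) : ∀ j, j ≤ n → (occ t j).card = j := by
  intro j
  induction j with
  | zero => simp [occ_zero]
  | succ j ih =>
    intro hj
    have hc : (occ t j).card = j := ih (by omega)
    have hne : ∃ q : ZMod n, q ∉ occ t j := by
      by_contra hall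
      push_neg at hall
      have : (occ t j).card = n := by
        have : occ t j = Finset.univ := Finset.eq_univ_iff_forall.2 hall
        rw [this, Finset.card_univ, ZMod.card]
      omega
    have hnm : spot t j ∉ occ t j := firstFree_not_mem hne (t j)
    rw [occ_succ, Finset.card_insert_of_notMem hnm, hc]

lemma occ_ne_univ (t : ℕ → ZMod n) {j : ℕ} (hj : j < n) : ∃ q : ZMod n, q ∉ occ t j := by
  by_contra hall
  push_neg at hall
  have : (occ t j).card = n := by
    have : occ t j = Finset.univ := Finset.eq_univ_iff_forall.2 hall
    rw [this, Finset.card_univ, ZMod.card]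
  have := occ_card t j (by omega)
  omega

lemma spot_not_mem (t : ℕ → ZMod n) {j : ℕ} (hj : j < n) : spot t j ∉ occ t j :=
  firstFree_not_mem (occ_ne_univ t hj) (t j)

lemma occ_congr {t t' : ℕ → ZMod n} : ∀ {j : ℕ}, (∀ i, i < j → t i = t' i) → occ t j = occ t' j := by
  intro j
  induction j with
  | zero => intro _; rfl
  | succ j ih =>
    intro h
    have h1 : occ t j = occ t' j := ih (fun i hi => h i (by omega))
    have h2 : spot t j = spot t' j := by rw [spot, spot, h1, h j (by omega)]
    rw [occ_succ, occ_succ, h1, h2]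

lemma spot_congr {t t' : ℕ → ZMod n} {j : ℕ} (h : ∀ i, i < j + 1 → t i = t' i) :
    spot t j = spot t' j := by
  rw [spot, spot, occ_congr (fun i hi => h i (by omega)), h j (by omega)]

end Aux2

/-! ### The sequence of empty places -/

/-- `Dseq S v r` : clockwise distance from `v` to the `r`-th empty place after `v`. -/
def Dseq {n : ℕ} (S : Finset (ZMod n)) (v : ZMod n) : ℕ → ℕ
  | 0 => 0
  | r + 1 => Dseq S v r + gap S (v + ((Dseq S v r : ℕ) : ZMod n))

section DseqLemmas
set_option linter.unusedSectionVars false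
variable {n : ℕ} [NeZero n] {S : Finset (ZMod n)} {v : ZMod n}

lemma Dseq_zero : Dseq S v 0 = 0 := rfl

lemma Dseq_succ (r : ℕ) :
    Dseq S v (r + 1) = Dseq S v r + gap S (v + ((Dseq S v r : ℕ) : ZMod n)) := rfl

lemma Dseq_strictMono (hne : ∃ q : ZMod n, q ∉ S) : StrictMono (Dseq S v) := by
  apply strictMono_nat_of_lt_succ
  intro r
  have := (gap_spec hne (v + ((Dseq S v r : ℕ) : ZMod n))).1
  rw [Dseq_succ]; omega

lemma Dseq_ge (hne : ∃ q : ZMod n, q ∉ S) (r : ℕ) : r ≤ Dseq S v r :=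
  (Dseq_strictMono hne).le_apply

lemma Dseq_e_not_mem (hne : ∃ q : ZMod n, q ∉ S) (hv : v ∉ S) (r : ℕ) :
    v + ((Dseq S v r : ℕ) : ZMod n) ∉ S := by
  induction r with
  | zero => simpa [Dseq_zero] using hv
  | succ r ih =>
    have h := (gap_spec hne (v + ((Dseq S v r : ℕ) : ZMod n))).2.2.2
    have : ((Dseq S v (r+1) : ℕ) : ZMod n)
        = ((Dseq S v r : ℕ) : ZMod n) + ((gap S (v + ((Dseq S v r : ℕ) : ZMod n)) : ℕ) : ZMod n) := by
      rw [Dseq_succ]; push_cast; ring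
    rw [this, ← add_assoc]
    exact h

lemma Dseq_between (hne : ∃ q : ZMod n, q ∉ S) {r d : ℕ}
    (h1 : Dseq S v r < d) (h2 : d < Dseq S v (r + 1)) : v + ((d : ℕ) : ZMod n) ∈ S := by
  set w := d - Dseq S v r with hw
  have hmem := (gap_spec hne (v + ((Dseq S v r : ℕ) : ZMod n))).2.2.1 w (by omega)
    (by rw [Dseq_succ] at h2; omega)
  have : ((d : ℕ) : ZMod n) = ((Dseq S v r : ℕ) : ZMod n) + ((w : ℕ) : ZMod n) := by
    have hd : d = Dseq S v r + w := by omega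
    rw [hd]; push_cast; ring
  rw [this, ← add_assoc]
  exact hmem

lemma exists_not_mem_of_card {S : Finset (ZMod n)} (h : S.card < n) : ∃ q : ZMod n, q ∉ S := by
  by_contra hall
  push_neg at hall
  have : S = Finset.univ := Finset.eq_univ_iff_forall.2 hall
  rw [this, Finset.card_univ, ZMod.card] at h
  omega

lemma Dseq_total {m : ℕ} (hv : v ∉ S) (hm : S.card + m = n) (hm1 : 1 ≤ m) :
    Dseq S v m = n := by
  have hne : ∃ q : ZMod n, q ∉ S := exists_not_mem_of_card (by omega)
  classical
  set T := (Finset.range n).filter (fun d => v + ((d : ℕ) : ZMod n) ∉ S) with hT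
  have hTcard : T.card = m := by
    have hcompl : Sᶜ.card = m := by
      rw [Finset.card_compl]
      have : Fintype.card (ZMod n) = n := ZMod.card n
      omega
    rw [← hcompl]
    apply Finset.card_bij (fun (d : ℕ) (_ : d ∈ T) => v + ((d : ℕ) : ZMod n))
    · intro d hd
      rw [hT, Finset.mem_filter] at hd
      exact Finset.mem_compl.2 hd.2
    · intro d hd d' hd' heq
      rw [hT, Finset.mem_filter, Finset.mem_range] at hd hd'
      exact cast_nat_inj hd.1 hd'.1 (by exact add_left_cancel heq)
    · intro q hq
      rw [Finset.mem_compl] at hq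
      refine ⟨(q - v).val, ?_, ?_⟩
      · rw [hT, Finset.mem_filter, Finset.mem_range]
        constructor
        · exact ZMod.val_lt _
        · rw [ZMod.natCast_rightInverse (q - v)]
          simpa using hq
      · rw [ZMod.natCast_rightInverse (q - v)]
        ring
  have hex : ∃ r : ℕ, n ≤ Dseq S v r := ⟨n, Dseq_ge hne n⟩
  set r₀ := Nat.find hex with hr₀def
  have hr₀ : n ≤ Dseq S v r₀ := Nat.find_spec hex
  have hmin : ∀ r, r < r₀ → Dseq S v r < n := by
    intro r hr
    have := Nat.find_min hex hr
    omega
  have hr₀pos : 0 < r₀ := by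
    rcases Nat.eq_zero_or_pos r₀ with h | h
    · exfalso
      rw [h] at hr₀
      rw [Dseq_zero] at hr₀
      have := NeZero.pos n
      omega
    · exact h
  have hcard2 : (Finset.range r₀).card = T.card := by
    apply Finset.card_bij (fun (r : ℕ) (_ : r ∈ Finset.range r₀) => Dseq S v r)
    · intro r hr
      rw [Finset.mem_range] at hr
      rw [hT, Finset.mem_filter, Finset.mem_range]
      exact ⟨hmin r hr, Dseq_e_not_mem hne hv r⟩
    · intro r hr r' hr' heq
      exact (Dseq_strictMono hne).injective heq
    · intro d hd
      rw [hT, Finset.mem_filter, Finset.mem_range] at hd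
      obtain ⟨hdn, hdS⟩ := hd
      have hP : ∃ r : ℕ, d < Dseq S v (r + 1) := ⟨r₀, by
        have : Dseq S v r₀ ≤ Dseq S v (r₀ + 1) := (Dseq_strictMono hne).monotone (by omega)
        omega⟩
      set r₁ := Nat.find hP with hr₁def
      have hP1 : d < Dseq S v (r₁ + 1) := Nat.find_spec hP
      have hP2 : Dseq S v r₁ ≤ d := by
        rcases Nat.eq_zero_or_pos r₁ with h0 | h0
        · rw [h0, Dseq_zero]; omega
        · have := Nat.find_min hP (show r₁ - 1 < r₁ by omega)
          have heq : r₁ - 1 + 1 = r₁ := by omega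
          rw [heq] at this
          omega
      have heqd : Dseq S v r₁ = d := by
        rcases Nat.lt_or_ge (Dseq S v r₁) d with hlt | hge
        · exact absurd (Dseq_between hne hlt hP1) hdS
        · omega
      have hr₁lt : r₁ < r₀ := by
        by_contra hge
        have : Dseq S v r₀ ≤ Dseq S v r₁ := (Dseq_strictMono hne).monotone (by omega)
        omega
      exact ⟨r₁, Finset.mem_range.2 hr₁lt, heqd⟩
  have hr₀m : r₀ = m := by
    rw [Finset.card_range] at hcard2
    omega
  obtain ⟨r₁, hr₁⟩ : ∃ r₁, r₀ = r₁ + 1 := ⟨r₀ - 1, by omega⟩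
  have hub : Dseq S v r₀ ≤ n := by
    rw [hr₁, Dseq_succ]
    have hlt : Dseq S v r₁ < n := hmin r₁ (by omega)
    have hgle : gap S (v + ((Dseq S v r₁ : ℕ) : ZMod n)) ≤ n - Dseq S v r₁ := by
      apply gap_le_of hne (by omega)
      have : (v + ((Dseq S v r₁ : ℕ) : ZMod n)) + ((n - Dseq S v r₁ : ℕ) : ZMod n) = v := by
        rw [add_assoc, ← Nat.cast_add]
        have : Dseq S v r₁ + (n - Dseq S v r₁) = n := by omega
        rw [this, ZMod.natCast_self, add_zero]
      rw [this]
      exact hv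
    omega
  rw [← hr₀m]
  omega

lemma Dseq_lt_n {m : ℕ} (hv : v ∉ S) (hm : S.card + m = n) (hm1 : 1 ≤ m) {r : ℕ}
    (hr : r < m) : Dseq S v r < n := by
  have hne : ∃ q : ZMod n, q ∉ S := exists_not_mem_of_card (by omega)
  have := Dseq_total hv hm hm1
  have h2 : Dseq S v r < Dseq S v m := Dseq_strictMono hne hr
  omega

/-- locate any `d < n` between consecutive empty-place distances -/
lemma Dseq_locate {m : ℕ} (hv : v ∉ S) (hm : S.card + m = n) (hm1 : 1 ≤ m) {d : ℕ}
    (hd : d < n) : ∃ r, r < m ∧ Dseq S v r ≤ d ∧ d < Dseq S v (r + 1) := by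
  have hne : ∃ q : ZMod n, q ∉ S := exists_not_mem_of_card (by omega)
  have htot : Dseq S v m = n := Dseq_total hv hm hm1
  have hP : ∃ r : ℕ, d < Dseq S v (r + 1) := ⟨m - 1, by
    have : m - 1 + 1 = m := by omega
    rw [this, htot]; exact hd⟩
  set r₁ := Nat.find hP with hr₁def
  have hP1 : d < Dseq S v (r₁ + 1) := Nat.find_spec hP
  have hP2 : Dseq S v r₁ ≤ d := by
    rcases Nat.eq_zero_or_pos r₁ with h0 | h0
    · rw [h0, Dseq_zero]; omega
    · have := Nat.find_min hP (show r₁ - 1 < r₁ by omega)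
      have heq : r₁ - 1 + 1 = r₁ := by omega
      rw [heq] at this
      omega
  have hr₁m : r₁ ≤ m - 1 := Nat.find_le (by
    have : m - 1 + 1 = m := by omega
    rw [this, htot]; exact hd)
  exact ⟨r₁, by omega, hP2, hP1⟩

lemma Dseq_eq_of_not_mem {m : ℕ} (hv : v ∉ S) (hm : S.card + m = n) (hm1 : 1 ≤ m) {d : ℕ}
    (hd : d < n) (hout : v + ((d : ℕ) : ZMod n) ∉ S) : ∃ r, r < m ∧ Dseq S v r = d := by
  have hne : ∃ q : ZMod n, q ∉ S := exists_not_mem_of_card (by omega)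
  obtain ⟨r, hrm, h1, h2⟩ := Dseq_locate hv hm hm1 hd
  rcases Nat.lt_or_ge (Dseq S v r) d with hlt | hge
  · exact absurd (Dseq_between hne hlt h2) hout
  · exact ⟨r, hrm, by omega⟩

lemma Dseq_strict_between_of_mem {m : ℕ} (hv : v ∉ S) (hm : S.card + m = n) (hm1 : 1 ≤ m)
    {d : ℕ} (hd : d < n) (hmem : v + ((d : ℕ) : ZMod n) ∈ S) :
    ∃ r, r < m ∧ Dseq S v r < d ∧ d < Dseq S v (r + 1) := by
  have hne : ∃ q : ZMod n, q ∉ S := exists_not_mem_of_card (by omega)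
  obtain ⟨r, hrm, h1, h2⟩ := Dseq_locate hv hm hm1 hd
  rcases Nat.lt_or_ge (Dseq S v r) d with hlt | hge
  · exact ⟨r, hrm, hlt, h2⟩
  · have : Dseq S v r = d := by omega
    rw [← this] at hmem
    exact absurd hmem (Dseq_e_not_mem hne hv r)

end DseqLemmas

section BlockLemmas
set_option linter.unusedSectionVars false
variable {n : ℕ} [NeZero n] {S : Finset (ZMod n)} {v : ZMod n} {m : ℕ}

/-- The size of the block of `v` in terms of `Dseq`. -/
lemma blockSize_spot (hv : v ∉ S) (hm : S.card + m = n) (hm1 : 1 ≤ m) :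
    blockSize S v = n - Dseq S v (m - 1) := by
  have hne : ∃ q : ZMod n, q ∉ S := exists_not_mem_of_card (by omega)
  have hlt : Dseq S v (m - 1) < n := Dseq_lt_n hv hm hm1 (by omega)
  apply blockSize_eq_of (by omega)
  · intro w hw1 hwlt
    have hcast : v - ((w : ℕ) : ZMod n) = v + ((n - w : ℕ) : ZMod n) := by
      have : ((n - w : ℕ) : ZMod n) = ((n : ℕ) : ZMod n) - ((w : ℕ) : ZMod n) :=
        Nat.cast_sub (by omega)
      rw [this, ZMod.natCast_self]
      ring
    rw [hcast]
    apply Dseq_between hne (r := m - 1)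
    · omega
    · have heq : m - 1 + 1 = m := by omega
      rw [heq, Dseq_total hv hm hm1]
      omega
  · have hcast : v - ((n - Dseq S v (m - 1) : ℕ) : ZMod n)
        = v + ((Dseq S v (m - 1) : ℕ) : ZMod n) := by
      have : ((n - Dseq S v (m-1) : ℕ) : ZMod n)
          = ((n : ℕ) : ZMod n) - ((Dseq S v (m-1) : ℕ) : ZMod n) := Nat.cast_sub (by omega)
      rw [this, ZMod.natCast_self]
      ring
    rw [hcast]
    exact Dseq_e_not_mem hne hv _

lemma nextEmpty_spot (hv : v ∉ S) (hm : S.card + m = n) (hm1 : 1 ≤ m) :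
    nextEmpty S v = v + ((Dseq S v 1 : ℕ) : ZMod n) := by
  have hne : ∃ q : ZMod n, q ∉ S := exists_not_mem_of_card (by omega)
  have hD1 : Dseq S v 1 = gap S v := by
    rw [Dseq_succ, Dseq_zero]
    simp
  obtain ⟨hg1, _, hgmem, hgout⟩ := gap_spec hne v
  apply nextEmpty_eq_of
  · omega
  · intro w hw1 hwlt
    exact hgmem w hw1 (by omega)
  · rw [hD1]; exact hgout

lemma blockSize_nextEmpty (hv : v ∉ S) (hm : S.card + m = n) (hm1 : 1 ≤ m) :
    blockSize S (v + ((Dseq S v 1 : ℕ) : ZMod n)) = Dseq S v 1 := by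
  have hne : ∃ q : ZMod n, q ∉ S := exists_not_mem_of_card (by omega)
  have hg1 : 1 ≤ Dseq S v 1 := by
    have := Dseq_strictMono (v := v) hne (show 0 < 1 by omega)
    rw [Dseq_zero] at this
    omega
  apply blockSize_eq_of hg1
  · intro w hw1 hwlt
    have hcast : v + ((Dseq S v 1 : ℕ) : ZMod n) - ((w : ℕ) : ZMod n)
        = v + ((Dseq S v 1 - w : ℕ) : ZMod n) := by
      have : ((Dseq S v 1 - w : ℕ) : ZMod n)
          = ((Dseq S v 1 : ℕ) : ZMod n) - ((w : ℕ) : ZMod n) := Nat.cast_sub (by omega)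
      rw [this]
      ring
    rw [hcast]
    apply Dseq_between hne (r := 0)
    · rw [Dseq_zero]; omega
    · have h01 : (0:ℕ) + 1 = 1 := rfl
      rw [h01]; omega
  · have hcast : v + ((Dseq S v 1 : ℕ) : ZMod n) - ((Dseq S v 1 : ℕ) : ZMod n) = v := by ring
    rw [hcast]
    exact hv

/-- `Rsize` in terms of `Dseq`. -/
lemma Rsize_eq_D1 (hv : v ∉ S) (hm : S.card + m = n) (hm1 : 1 ≤ m) :
    blockSize S (nextEmpty S v) = Dseq S v 1 := by
  rw [nextEmpty_spot hv hm hm1]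
  exact blockSize_nextEmpty hv hm hm1

end BlockLemmas

/-! ### The interval-exchange maps -/

/-- Interval exchange on `[0,n)`: swaps the segments `[1,a]` and `(a, a+b]`. -/
def sigmaFn (a b d : ℕ) : ℕ :=
  if 1 ≤ d ∧ d ≤ a then d + b else if a < d ∧ d ≤ a + b then d - a else d

lemma sigmaFn_lt {a b d n : ℕ} (hab : a + b < n) (hd : d < n) : sigmaFn a b d < n := by
  unfold sigmaFn; split_ifs <;> omega

lemma sigmaFn_inv {a b d : ℕ} : sigmaFn b a (sigmaFn a b d) = d := by
  unfold sigmaFn; split_ifs <;> omega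

lemma sigmaFn_zero {a b : ℕ} : sigmaFn a b 0 = 0 := by unfold sigmaFn; split_ifs <;> omega

lemma sigmaFn_eq1 {a b d : ℕ} (h1 : 1 ≤ d) (h2 : d ≤ a) : sigmaFn a b d = d + b := by
  unfold sigmaFn; split_ifs <;> omega

lemma sigmaFn_eq2 {a b d : ℕ} (h1 : a < d) (h2 : d ≤ a + b) : sigmaFn a b d = d - a := by
  unfold sigmaFn; split_ifs <;> omega

lemma sigmaFn_eq3 {a b d : ℕ} (h : d = 0 ∨ a + b < d) : sigmaFn a b d = d := by
  unfold sigmaFn; split_ifs <;> omega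

/-- The corresponding piecewise-translation of `ZMod n`, anchored at `v`. -/
def tauMap {n : ℕ} (v : ZMod n) (a b : ℕ) (p : ZMod n) : ZMod n :=
  v + ((sigmaFn a b (p - v).val : ℕ) : ZMod n)

section TauLemmas
set_option linter.unusedSectionVars false
variable {n : ℕ} [NeZero n] {v : ZMod n} {a b : ℕ}

lemma shift_val {d : ℕ} (hd : d < n) : ((v + ((d : ℕ) : ZMod n)) - v).val = d := by
  rw [add_sub_cancel_left]
  exact ZMod.val_cast_of_lt hd

lemma tauMap_left_inv (hab : a + b < n) (p : ZMod n) :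
    tauMap v b a (tauMap v a b p) = p := by
  rw [tauMap, tauMap, shift_val (sigmaFn_lt hab (ZMod.val_lt (p - v))), sigmaFn_inv,
    ZMod.natCast_rightInverse (p - v)]
  ring

lemma tauMap_inj (hab : a + b < n) : Function.Injective (tauMap v a b) := by
  intro p q h
  have := congrArg (tauMap v b a) h
  rwa [tauMap_left_inv hab, tauMap_left_inv hab] at this

lemma tauMap_fix_v : tauMap v a b v = v := by
  rw [tauMap]
  simp [sigmaFn_zero]

lemma tauMap_eval1 {q : ZMod n} (h1 : 1 ≤ (q - v).val) (h2 : (q - v).val ≤ a) :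
    tauMap v a b q = q + ((b : ℕ) : ZMod n) := by
  rw [tauMap, sigmaFn_eq1 h1 h2]
  push_cast
  rw [ZMod.natCast_rightInverse (q - v)]
  ring

lemma tauMap_eval2 {q : ZMod n} (h1 : a < (q - v).val) (h2 : (q - v).val ≤ a + b) :
    tauMap v a b q = q - ((a : ℕ) : ZMod n) := by
  rw [tauMap, sigmaFn_eq2 h1 h2]
  have : ((((q - v).val - a : ℕ)) : ZMod n)
      = (((q - v).val : ℕ) : ZMod n) - ((a : ℕ) : ZMod n) := Nat.cast_sub (by omega)
  rw [this, ZMod.natCast_rightInverse (q - v)]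
  ring

lemma tauMap_eval3 {q : ZMod n} (h : (q - v).val = 0 ∨ a + b < (q - v).val) :
    tauMap v a b q = q := by
  rw [tauMap, sigmaFn_eq3 h, ZMod.natCast_rightInverse (q - v)]
  ring

end TauLemmas

/-! ### Equivariance of the parking process under the block exchange map -/

section Equivariance
set_option linter.unusedSectionVars false
variable {n : ℕ} [NeZero n] {S : Finset (ZMod n)} {v : ZMod n} {m a b j : ℕ}

/-- On the search path of a car, the exchange map acts as a single translation. -/
lemma tau_translate_const
    (hv : v ∉ S) (hm : S.card + m = n) (hm1 : 1 ≤ m)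
    (hj : j ≤ m - 1) (ha : a = Dseq S v j) (hb : a + b = Dseq S v (m - 1))
    {O : Finset (ZMod n)} (hO : O ⊆ S) (p : ZMod n) {dstar : ℕ}
    (hmemO : ∀ w, w < dstar → p + ((w : ℕ) : ZMod n) ∈ O)
    (houtO : p + ((dstar : ℕ) : ZMod n) ∉ O) :
    ∃ c : ZMod n, ∀ w, w ≤ dstar →
      tauMap v a b (p + ((w : ℕ) : ZMod n)) = (p + ((w : ℕ) : ZMod n)) + c := by
  have hne : ∃ q : ZMod n, q ∉ S := exists_not_mem_of_card (by omega)
  have habn : a + b < n := by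
    rw [hb]; exact Dseq_lt_n hv hm hm1 (by omega)
  have hmono := Dseq_strictMono (v := v) hne
  by_cases hpS : p ∈ S
  · set dp := (p - v).val with hdp
    have hdpn : dp < n := ZMod.val_lt _
    have hp : p = v + ((dp : ℕ) : ZMod n) := by
      rw [hdp, ZMod.natCast_rightInverse (p - v)]; ring
    have hpm : v + ((dp : ℕ) : ZMod n) ∈ S := by rwa [← hp]
    obtain ⟨r, hrm, hr1, hr2⟩ := Dseq_strict_between_of_mem hv hm hm1 hdpn hpm
    have heqq : ∀ w : ℕ, p + ((w : ℕ) : ZMod n) = v + ((dp + w : ℕ) : ZMod n) := by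
      intro w
      rw [hp]; push_cast; ring
    have hval : ∀ w : ℕ, dp + w < n → (p + ((w : ℕ) : ZMod n) - v).val = dp + w := by
      intro w hwn
      rw [heqq w, shift_val hwn]
    -- the endpoint of the current block is not in `S`, hence bounds the search
    have hnotS : p + ((Dseq S v (r + 1) - dp : ℕ) : ZMod n) ∉ S := by
      have hcast : p + ((Dseq S v (r + 1) - dp : ℕ) : ZMod n)
          = v + ((Dseq S v (r + 1) : ℕ) : ZMod n) := by
        rw [heqq]
        congr 1
        congr 1
        omega
      rw [hcast]
      exact Dseq_e_not_mem hne hv (r + 1)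
    have hdle : dstar ≤ Dseq S v (r + 1) - dp := firstFree_index_le hO hmemO hnotS
    rcases le_or_gt (r + 1) j with hcase | hcase
    · -- block lies in the first exchanged segment : translation by `+b`
      have hra : Dseq S v (r + 1) ≤ a := by
        rw [ha]
        exact hmono.monotone hcase
      refine ⟨((b : ℕ) : ZMod n), ?_⟩
      intro w hw
      apply tauMap_eval1
      · rw [hval w (by omega)]; omega
      · rw [hval w (by omega)]; omega
    · have hjr : j ≤ r := by omega
      rcases Nat.lt_or_ge (r + 1) m with hcase2 | hcase2
      · -- block lies in the second exchanged segment : translation by `-a`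
        have hra : a ≤ Dseq S v r := by
          rw [ha]; exact hmono.monotone hjr
        have hrb : Dseq S v (r + 1) ≤ a + b := by
          rw [hb]; exact hmono.monotone (by omega)
        refine ⟨-((a : ℕ) : ZMod n), ?_⟩
        intro w hw
        rw [tauMap_eval2 (a := a) (b := b) (v := v) ?g1 ?g2]
        · rw [sub_eq_add_neg]
        case g1 => rw [hval w (by omega)]; omega
        case g2 => rw [hval w (by omega)]; omega
      · -- block 0 (containing `v`) : fixed pointwise
        have hrm1 : r + 1 = m := by omega
        have hrr : r = m - 1 := by omega
        have habr : a + b = Dseq S v r := by rw [hb, hrr]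
        have htot : Dseq S v (r + 1) = n := by rw [hrm1]; exact Dseq_total hv hm hm1
        refine ⟨0, ?_⟩
        intro w hw
        rw [add_zero]
        rcases Nat.lt_or_ge (dp + w) n with hlt | hge
        · apply tauMap_eval3
          right
          rw [hval w hlt]
          omega
        · have hweq : dp + w = n := by omega
          have hpv : p + ((w : ℕ) : ZMod n) = v := by
            rw [heqq w]
            have : ((dp + w : ℕ) : ZMod n) = 0 := by rw [hweq, ZMod.natCast_self]
            rw [this, add_zero]
          rw [hpv, tauMap_fix_v]
  · -- `p` is already empty : the search is trivial
    have hdz : dstar = 0 := by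
      by_contra h0
      exact hpS (hO (by simpa using hmemO 0 (by omega)))
    refine ⟨tauMap v a b p - p, ?_⟩
    intro w hw
    have hw0 : w = 0 := by omega
    subst hw0
    simp

/-- `firstFree` commutes with the exchange map. -/
lemma firstFree_image_tau
    (hv : v ∉ S) (hm : S.card + m = n) (hm1 : 1 ≤ m)
    (hj : j ≤ m - 1) (ha : a = Dseq S v j) (hb : a + b = Dseq S v (m - 1))
    {O : Finset (ZMod n)} (hO : O ⊆ S) (p : ZMod n) :
    firstFree (O.image (tauMap v a b)) (tauMap v a b p) = tauMap v a b (firstFree O p) := by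
  have hne : ∃ q : ZMod n, q ∉ S := exists_not_mem_of_card (by omega)
  have habn : a + b < n := by
    rw [hb]; exact Dseq_lt_n hv hm hm1 (by omega)
  have hneO : ∃ q : ZMod n, q ∉ O := ⟨hne.choose, fun h => hne.choose_spec (hO h)⟩
  obtain ⟨ds, hdsn, hmemO, houtO, heq⟩ := exists_firstFree hneO p
  obtain ⟨c, hc⟩ := tau_translate_const hv hm hm1 hj ha hb hO p hmemO houtO
  have h0 : tauMap v a b p = p + c := by
    have := hc 0 (by omega)
    simpa using this
  have hcomm : ∀ w, w ≤ ds →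
      tauMap v a b p + ((w : ℕ) : ZMod n) = tauMap v a b (p + ((w : ℕ) : ZMod n)) := by
    intro w hw
    rw [h0, hc w hw]
    ring
  rw [heq]
  rw [← hcomm ds le_rfl]
  apply firstFree_eq_of
  · intro w hw
    rw [hcomm w (by omega)]
    exact Finset.mem_image_of_mem _ (hmemO w hw)
  · rw [hcomm ds le_rfl]
    intro hmem
    obtain ⟨x, hx, hxeq⟩ := Finset.mem_image.1 hmem
    exact houtO (tauMap_inj habn hxeq ▸ hx)

end Equivariance

section OccEquiv
set_option linter.unusedSectionVars false
variable {n : ℕ} [NeZero n] {m a b j K : ℕ} {t : ℕ → ZMod n}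

/-- The parking process is equivariant under the block exchange map. -/
lemma occ_image_tau (hK : K + 2 ≤ n) (hm : m = n - K)
    (hj : j ≤ m - 1) (ha : a = Dseq (occ t K) (spot t K) j)
    (hb : a + b = Dseq (occ t K) (spot t K) (m - 1)) :
    ∀ i, i ≤ K →
      occ (fun r => tauMap (spot t K) a b (t r)) i = (occ t i).image (tauMap (spot t K) a b) := by
  have hv : spot t K ∉ occ t K := spot_not_mem t (by omega)
  have hcard : (occ t K).card = K := occ_card t K (by omega)
  have hmc : (occ t K).card + m = n := by omega
  have hm1 : 1 ≤ m := by omega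
  intro i
  induction i with
  | zero => intro _; simp [occ_zero]
  | succ i ih =>
    intro hi
    have hocc : occ (fun r => tauMap (spot t K) a b (t r)) i
        = (occ t i).image (tauMap (spot t K) a b) := ih (by omega)
    have hsub : occ t i ⊆ occ t K := occ_subset t (by omega)
    have hspot : spot (fun r => tauMap (spot t K) a b (t r)) i
        = tauMap (spot t K) a b (spot t i) := by
      rw [spot, hocc]
      exact firstFree_image_tau hv hmc hm1 hj ha hb hsub (t i)
    rw [occ_succ, occ_succ, hocc, hspot, Finset.image_insert]

lemma spot_image_tau (hK : K + 2 ≤ n) (hm : m = n - K)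
    (hj : j ≤ m - 1) (ha : a = Dseq (occ t K) (spot t K) j)
    (hb : a + b = Dseq (occ t K) (spot t K) (m - 1)) {i : ℕ} (hi : i ≤ K) :
    spot (fun r => tauMap (spot t K) a b (t r)) i = tauMap (spot t K) a b (spot t i) := by
  have hv : spot t K ∉ occ t K := spot_not_mem t (by omega)
  have hcard : (occ t K).card = K := occ_card t K (by omega)
  have hmc : (occ t K).card + m = n := by omega
  rw [spot, occ_image_tau hK hm hj ha hb i hi]
  exact firstFree_image_tau hv hmc (by omega) hj ha hb (occ_subset t hi) (t i)

end OccEquiv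

section DseqImage
set_option linter.unusedSectionVars false
variable {n : ℕ} [NeZero n] {S : Finset (ZMod n)} {v : ZMod n} {m a b j : ℕ}

lemma mem_image_tau (habn : a + b < n) (p : ZMod n) :
    p ∈ S.image (tauMap v a b) ↔ tauMap v b a p ∈ S := by
  constructor
  · rintro hp
    obtain ⟨x, hx, hxe⟩ := Finset.mem_image.1 hp
    rw [← hxe, tauMap_left_inv habn]
    exact hx
  · intro hp
    have : p = tauMap v a b (tauMap v b a p) := (tauMap_left_inv (by omega) p).symm
    rw [this]
    exact Finset.mem_image_of_mem _ hp

/-- The expected distance sequence of the transformed configuration. -/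
def Dexp (S : Finset (ZMod n)) (v : ZMod n) (m b j r : ℕ) : ℕ :=
  if r ≤ m - 1 - j then Dseq S v (j + r) - Dseq S v j
  else Dseq S v (r - (m - 1 - j)) + b

lemma Dseq_image_eq
    (hv : v ∉ S) (hm : S.card + m = n) (hm1 : 1 ≤ m)
    (hj : j ≤ m - 1) (ha : a = Dseq S v j) (hb : a + b = Dseq S v (m - 1)) :
    ∀ r, r ≤ m - 1 → Dseq (S.image (tauMap v a b)) v r = Dexp S v m b j r := by
  subst ha
  have hne : ∃ q : ZMod n, q ∉ S := exists_not_mem_of_card (by omega)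
  have hmono := Dseq_strictMono (v := v) hne
  have habn : Dseq S v j + b < n := by
    rw [hb]; exact Dseq_lt_n hv hm hm1 (by omega)
  have hDj : Dseq S v j ≤ Dseq S v (m - 1) := hmono.monotone hj
  intro r
  induction r with
  | zero =>
    intro _
    rw [Dseq_zero, Dexp, if_pos (by omega)]
    simp only [Nat.add_zero]
    omega
  | succ r ih =>
    intro hr
    have hDr : Dseq (S.image (tauMap v (Dseq S v j) b)) v r = Dexp S v m b j r := ih (by omega)
    rw [Dseq_succ, hDr]
    have hgap : gap (S.image (tauMap v (Dseq S v j) b)) (v + ((Dexp S v m b j r : ℕ) : ZMod n))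
        = Dexp S v m b j (r + 1) - Dexp S v m b j r := by
      rcases le_or_gt (r + 1) (m - 1 - j) with hA | hB
      · -- family A : blocks taken from after the cut
        have hrA : r ≤ m - 1 - j := by omega
        have hjr1 : j + r + 1 ≤ m - 1 := by omega
        have hDe : Dexp S v m b j r = Dseq S v (j + r) - Dseq S v j := by
          rw [Dexp, if_pos hrA]
        have hDe1 : Dexp S v m b j (r + 1) = Dseq S v (j + r + 1) - Dseq S v j := by
          rw [Dexp, if_pos hA]
          have hidx : j + (r + 1) = j + r + 1 := by omega
          rw [hidx]
        have hmono1 : Dseq S v j ≤ Dseq S v (j + r) := hmono.monotone (by omega)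
        have hmono2 : Dseq S v (j + r) < Dseq S v (j + r + 1) := hmono (by omega)
        have hmono3 : Dseq S v (j + r + 1) ≤ Dseq S v (m - 1) := hmono.monotone hjr1
        rw [hDe, hDe1]
        set c := Dseq S v (j + r) - Dseq S v j with hc
        set X := Dseq S v (j + r + 1) - Dseq S v j with hX
        have hkey : ∀ w, 1 ≤ w → c + w ≤ X →
            tauMap v b (Dseq S v j) (v + ((c : ℕ) : ZMod n) + ((w : ℕ) : ZMod n))
              = v + ((Dseq S v j + c + w : ℕ) : ZMod n) := by
          intro w hw1 hw2
          have hcomb : v + ((c : ℕ) : ZMod n) + ((w : ℕ) : ZMod n)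
              = v + ((c + w : ℕ) : ZMod n) := by push_cast; ring
          have hdn : c + w < n := by omega
          rw [hcomb]
          have hval : ((v + ((c + w : ℕ) : ZMod n)) - v).val = c + w := shift_val hdn
          rw [tauMap_eval1 (by rw [hval]; omega) (by rw [hval]; omega)]
          push_cast
          ring
        apply gap_eq_of
        · omega
        · intro w hw1 hw2
          rw [mem_image_tau habn, hkey w hw1 (by omega)]
          exact Dseq_between hne (r := j + r) (by omega) (by omega)
        · rw [mem_image_tau habn, hkey (X - c) (by omega) (by omega)]
          have hnat : Dseq S v j + c + (X - c) = Dseq S v (j + r + 1) := by omega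
          rw [hnat]
          exact Dseq_e_not_mem hne hv (j + r + 1)
      · -- family B : blocks taken from before the cut
        have hj1 : 1 ≤ j := by omega
        set i := r - (m - 1 - j) with hi
        have hij : i + 1 ≤ j := by omega
        have hDe : Dexp S v m b j r = Dseq S v i + b := by
          rcases Nat.lt_or_ge r (m - 1 - j) with h | h
          · omega
          rcases Nat.eq_or_lt_of_le h with h2 | h2
          · rw [Dexp, if_pos (by omega)]
            have hi0 : i = 0 := by omega
            have hjr : j + r = m - 1 := by omega
            rw [hi0, Dseq_zero, hjr]
            omega
          · rw [Dexp, if_neg (by omega)]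
        have hDe1 : Dexp S v m b j (r + 1) = Dseq S v (i + 1) + b := by
          rw [Dexp, if_neg (by omega)]
          congr 2
          omega
        have hmono1 : Dseq S v (i + 1) ≤ Dseq S v j := hmono.monotone hij
        have hmono2 : Dseq S v i < Dseq S v (i + 1) := hmono (by omega)
        rw [hDe, hDe1]
        set c := Dseq S v i + b with hc
        have hkey : ∀ w, 1 ≤ w → Dseq S v i + w ≤ Dseq S v (i + 1) →
            tauMap v b (Dseq S v j) (v + ((c : ℕ) : ZMod n) + ((w : ℕ) : ZMod n))
              = v + ((Dseq S v i + w : ℕ) : ZMod n) := by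
          intro w hw1 hw2
          have hcomb : v + ((c : ℕ) : ZMod n) + ((w : ℕ) : ZMod n)
              = v + ((c + w : ℕ) : ZMod n) := by push_cast; ring
          have hdn : c + w < n := by omega
          rw [hcomb]
          have hval : ((v + ((c + w : ℕ) : ZMod n)) - v).val = c + w := shift_val hdn
          rw [tauMap_eval2 (by rw [hval]; omega) (by rw [hval]; omega)]
          have hcast : ((c + w : ℕ) : ZMod n)
              = ((Dseq S v i + w : ℕ) : ZMod n) + ((b : ℕ) : ZMod n) := by
            rw [hc]; push_cast; ring
          rw [hcast]
          ring
        apply gap_eq_of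
        · omega
        · intro w hw1 hw2
          rw [mem_image_tau habn, hkey w hw1 (by omega)]
          exact Dseq_between hne (r := i) (by omega) (by omega)
        · rw [mem_image_tau habn]
          have hend : Dseq S v (i + 1) + b - c = Dseq S v (i + 1) - Dseq S v i := by omega
          rw [hend, hkey (Dseq S v (i + 1) - Dseq S v i) (by omega) (by omega)]
          have hnat : Dseq S v i + (Dseq S v (i + 1) - Dseq S v i) = Dseq S v (i + 1) := by
            omega
          rw [hnat]
          exact Dseq_e_not_mem hne hv (i + 1)
    rw [hgap]
    -- `Dexp` is monotone, so the subtraction cancels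
    have hmon : Dexp S v m b j r ≤ Dexp S v m b j (r + 1) := by
      rcases le_or_gt (r + 1) (m - 1 - j) with hA | hB
      · rw [Dexp, Dexp, if_pos (by omega), if_pos hA]
        have hidx : j + (r + 1) = j + r + 1 := by omega
        rw [hidx]
        have h1 : Dseq S v (j + r) ≤ Dseq S v (j + r + 1) := (hmono.monotone (by omega))
        have h2 : Dseq S v j ≤ Dseq S v (j + r) := hmono.monotone (by omega)
        omega
      · rcases Nat.lt_or_ge r (m - 1 - j) with h | h
        · omega
        · have h1 : Dseq S v (r - (m - 1 - j)) ≤ Dseq S v (r + 1 - (m - 1 - j)) :=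
            hmono.monotone (by omega)
          rcases Nat.eq_or_lt_of_le h with h2 | h2
          · rw [Dexp, Dexp, if_pos (by omega), if_neg (by omega)]
            have hjr : j + r = m - 1 := by omega
            have : r - (m - 1 - j) = 0 := by omega
            rw [hjr]
            have h3 : Dseq S v (r + 1 - (m - 1 - j)) = Dseq S v 1 := by
              congr 1; omega
            have h4 : (0:ℕ) ≤ Dseq S v (r+1-(m-1-j)) := by omega
            omega
          · rw [Dexp, Dexp, if_neg (by omega), if_neg (by omega)]
            omega
    omega

end DseqImage

section DseqImageCors
set_option linter.unusedSectionVars false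
variable {n : ℕ} [NeZero n] {S : Finset (ZMod n)} {v : ZMod n} {m a b j : ℕ}

lemma Dseq_image_last
    (hv : v ∉ S) (hm : S.card + m = n) (hm1 : 1 ≤ m)
    (hj : j ≤ m - 1) (ha : a = Dseq S v j) (hb : a + b = Dseq S v (m - 1)) :
    Dseq (S.image (tauMap v a b)) v (m - 1) = a + b := by
  have hne : ∃ q : ZMod n, q ∉ S := exists_not_mem_of_card (by omega)
  have hmono := Dseq_strictMono (v := v) hne
  rw [Dseq_image_eq hv hm hm1 hj ha hb (m - 1) le_rfl]
  by_cases hc : m - 1 ≤ m - 1 - j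
  · have hj0 : j = 0 := by omega
    subst hj0
    rw [Dexp, if_pos hc]
    have h0 : (0 : ℕ) + (m - 1) = m - 1 := by omega
    rw [h0]
    have ha0 : a = 0 := by rw [ha, Dseq_zero]
    omega
  · rw [Dexp, if_neg hc]
    have hidx : m - 1 - (m - 1 - j) = j := by omega
    rw [hidx, ← ha]

lemma Dseq_image_one
    (hv : v ∉ S) (hm : S.card + m = n) (hm1 : 1 ≤ m)
    (hj : j ≤ m - 1) (ha : a = Dseq S v j) (hb : a + b = Dseq S v (m - 1))
    (hj2 : j + 1 ≤ m - 1) :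
    Dseq (S.image (tauMap v a b)) v 1 = Dseq S v (j + 1) - Dseq S v j := by
  rw [Dseq_image_eq hv hm hm1 hj ha hb 1 (by omega), Dexp, if_pos (by omega)]

lemma Dseq_image_cut
    (hv : v ∉ S) (hm : S.card + m = n) (hm1 : 1 ≤ m)
    (hj : j ≤ m - 1) (ha : a = Dseq S v j) (hb : a + b = Dseq S v (m - 1)) :
    Dseq (S.image (tauMap v a b)) v (m - 1 - j) = b := by
  have hne : ∃ q : ZMod n, q ∉ S := exists_not_mem_of_card (by omega)
  have hmono := Dseq_strictMono (v := v) hne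
  have hDj : Dseq S v j ≤ Dseq S v (m - 1) := hmono.monotone hj
  rw [Dseq_image_eq hv hm hm1 hj ha hb (m - 1 - j) (by omega), Dexp, if_pos le_rfl]
  have hidx : j + (m - 1 - j) = m - 1 := by omega
  rw [hidx]
  omega

lemma image_tau_not_mem
    (hv : v ∉ S) (habn : a + b < n) : v ∉ S.image (tauMap v a b) := by
  rw [mem_image_tau habn, tauMap_fix_v]
  exact hv

lemma image_tau_card (habn : a + b < n) :
    (S.image (tauMap v a b)).card = S.card :=
  Finset.card_image_of_injective S (tauMap_inj habn)

end DseqImageCors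

/-! ### The bijection on try-sequences -/

def toFin {n : ℕ} [NeZero n] (z : ZMod n) : Fin n := ⟨z.val, ZMod.val_lt z⟩

lemma toFin_cast {n : ℕ} [NeZero n] (z : ZMod n) : (((toFin z : ℕ)) : ZMod n) = z :=
  ZMod.natCast_rightInverse z

lemma toFin_of_cast {n : ℕ} [NeZero n] (x : Fin n) : toFin (((x : ℕ) : ZMod n)) = x := by
  apply Fin.ext
  exact ZMod.val_cast_of_lt x.2

def cfgS (n K : ℕ) (u : Fin (n - 1) → Fin n) : Finset (ZMod n) := occ (extend n (n - 1) u) K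
def cfgV (n K : ℕ) (u : Fin (n - 1) → Fin n) : ZMod n := spot (extend n (n - 1) u) K
def cfgD (n K : ℕ) (u : Fin (n - 1) → Fin n) (r : ℕ) : ℕ := Dseq (cfgS n K u) (cfgV n K u) r
def cfgA (n K j : ℕ) (u : Fin (n - 1) → Fin n) : ℕ := cfgD n K u j
def cfgB (n K j : ℕ) (u : Fin (n - 1) → Fin n) : ℕ := cfgD n K u (n - K - 1) - cfgD n K u j
def cfgTau (n K j : ℕ) [NeZero n] (u : Fin (n - 1) → Fin n) : ZMod n → ZMod n :=
  tauMap (cfgV n K u) (cfgA n K j u) (cfgB n K j u)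

/-- The block-rotation bijection on try-sequences. -/
def Phi (n K j : ℕ) [NeZero n] (u : Fin (n - 1) → Fin n) : Fin (n - 1) → Fin n :=
  fun i => if (i : ℕ) < K + 1 then toFin (cfgTau n K j u (((u i : ℕ) : ZMod n))) else u i

section PhiLemmas
set_option linter.unusedSectionVars false
variable {n K j : ℕ} [NeZero n] {u : Fin (n - 1) → Fin n}

lemma cfg_not_mem (hK : K + 2 ≤ n) : cfgV n K u ∉ cfgS n K u :=
  spot_not_mem _ (by omega)

lemma cfg_card (hK : K + 2 ≤ n) : (cfgS n K u).card + (n - K) = n := by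
  have := occ_card (extend n (n - 1) u) K (by omega)
  rw [cfgS, this]
  omega

lemma cfg_ab (hK : K + 2 ≤ n) (hj : j ≤ n - K - 1) :
    cfgA n K j u + cfgB n K j u = cfgD n K u (n - K - 1) := by
  have hne : ∃ q : ZMod n, q ∉ cfgS n K u :=
    exists_not_mem_of_card (by have := cfg_card (u := u) hK; omega)
  have hmono := Dseq_strictMono (S := cfgS n K u) (v := cfgV n K u) hne
  have : cfgD n K u j ≤ cfgD n K u (n - K - 1) := hmono.monotone hj
  rw [cfgA, cfgB]
  omega

lemma extend_Phi (hK : K + 2 ≤ n) :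
    ∀ i : ℕ, extend n (n - 1) (Phi n K j u) i
      = if i < K + 1 then cfgTau n K j u (extend n (n - 1) u i)
        else extend n (n - 1) u i := by
  intro i
  by_cases hi : i < n - 1
  · rw [extend, dif_pos hi, extend, dif_pos hi]
    by_cases hiK : i < K + 1
    · rw [if_pos hiK]
      have : Phi n K j u ⟨i, hi⟩ = toFin (cfgTau n K j u (((u ⟨i, hi⟩ : ℕ) : ZMod n))) := by
        rw [Phi, if_pos hiK]
      rw [this, toFin_cast]
    · rw [if_neg hiK]
      have : Phi n K j u ⟨i, hi⟩ = u ⟨i, hi⟩ := by rw [Phi, if_neg hiK]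
      rw [this]
  · rw [extend, dif_neg hi, extend, dif_neg hi, if_neg (by omega)]

lemma occ_Phi (hK : K + 2 ≤ n) (hj : j ≤ n - K - 1) :
    occ (extend n (n - 1) (Phi n K j u)) K = (cfgS n K u).image (cfgTau n K j u) := by
  have h1 : occ (extend n (n - 1) (Phi n K j u)) K
      = occ (fun r => cfgTau n K j u (extend n (n - 1) u r)) K := by
    apply occ_congr
    intro i hi
    rw [extend_Phi hK i, if_pos (by omega)]
  rw [h1]
  exact occ_image_tau hK rfl hj rfl (cfg_ab hK hj) K le_rfl

lemma spot_Phi (hK : K + 2 ≤ n) (hj : j ≤ n - K - 1) :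
    spot (extend n (n - 1) (Phi n K j u)) K = cfgV n K u := by
  have h1 : spot (extend n (n - 1) (Phi n K j u)) K
      = spot (fun r => cfgTau n K j u (extend n (n - 1) u r)) K := by
    apply spot_congr
    intro i hi
    rw [extend_Phi hK i, if_pos (by omega)]
  rw [h1]
  simp only [cfgTau, cfgA, cfgB, cfgD, cfgS, cfgV]
  have hb' := cfg_ab (u := u) hK hj
  simp only [cfgA, cfgB, cfgD, cfgS, cfgV] at hb'
  rw [spot_image_tau hK rfl hj rfl hb' (i := K) le_rfl]
  exact tauMap_fix_v

lemma cfg_ab_lt (hK : K + 2 ≤ n) (hj : j ≤ n - K - 1) :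
    cfgA n K j u + cfgB n K j u < n := by
  rw [cfg_ab hK hj]
  exact Dseq_lt_n (cfg_not_mem hK) (cfg_card hK) (by omega) (by omega)

lemma Lsize_val (hK : K + 2 ≤ n) :
    Lsize (extend n (n - 1) u) (K + 1) = n - cfgD n K u (n - K - 1) := by
  rw [Lsize]
  simp only [Nat.add_sub_cancel]
  exact blockSize_spot (cfg_not_mem hK) (cfg_card hK) (by omega)

lemma Lsize_Phi (hK : K + 2 ≤ n) (hj : j ≤ n - K - 1) :
    Lsize (extend n (n - 1) (Phi n K j u)) (K + 1) = Lsize (extend n (n - 1) u) (K + 1) := by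
  have hb' := cfg_ab (u := u) hK hj
  simp only [cfgA, cfgB, cfgD, cfgS, cfgV] at hb'
  have hvraw := cfg_not_mem (u := u) hK
  simp only [cfgS, cfgV] at hvraw
  have hcraw := cfg_card (u := u) hK
  simp only [cfgS] at hcraw
  have hablt := cfg_ab_lt (u := u) hK hj
  simp only [cfgA, cfgB, cfgD, cfgS, cfgV] at hablt
  rw [Lsize]
  simp only [Nat.add_sub_cancel]
  rw [occ_Phi hK hj, spot_Phi hK hj, Lsize_val hK]
  simp only [cfgTau, cfgA, cfgB, cfgD, cfgS, cfgV]
  have hv'' := image_tau_not_mem hvraw hablt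
  have hcard'' : ((occ (extend n (n-1) u) K).image
      (tauMap (spot (extend n (n-1) u) K)
        (Dseq (occ (extend n (n-1) u) K) (spot (extend n (n-1) u) K) j)
        (Dseq (occ (extend n (n-1) u) K) (spot (extend n (n-1) u) K) (n - K - 1)
          - Dseq (occ (extend n (n-1) u) K) (spot (extend n (n-1) u) K) j))).card
      + (n - K) = n := by
    rw [image_tau_card hablt]
    exact hcraw
  rw [blockSize_spot hv'' hcard'' (by omega)]
  rw [Dseq_image_last hvraw hcraw (by omega) hj rfl hb']
  rw [hb']

lemma Rsize_Phi (hK : K + 2 ≤ n) (hj2 : j < n - K - 1) :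
    Rsize (extend n (n - 1) (Phi n K j u)) (K + 1) = cfgD n K u (j + 1) - cfgD n K u j := by
  have hj : j ≤ n - K - 1 := by omega
  have hb' := cfg_ab (u := u) hK hj
  simp only [cfgA, cfgB, cfgD, cfgS, cfgV] at hb'
  have hvraw := cfg_not_mem (u := u) hK
  simp only [cfgS, cfgV] at hvraw
  have hcraw := cfg_card (u := u) hK
  simp only [cfgS] at hcraw
  have hablt := cfg_ab_lt (u := u) hK hj
  simp only [cfgA, cfgB, cfgD, cfgS, cfgV] at hablt
  rw [Rsize]
  simp only [Nat.add_sub_cancel]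
  rw [occ_Phi hK hj, spot_Phi hK hj]
  simp only [cfgTau, cfgA, cfgB, cfgD, cfgS, cfgV]
  have hv'' := image_tau_not_mem hvraw hablt
  have hcard'' : ((occ (extend n (n-1) u) K).image
      (tauMap (spot (extend n (n-1) u) K)
        (Dseq (occ (extend n (n-1) u) K) (spot (extend n (n-1) u) K) j)
        (Dseq (occ (extend n (n-1) u) K) (spot (extend n (n-1) u) K) (n - K - 1)
          - Dseq (occ (extend n (n-1) u) K) (spot (extend n (n-1) u) K) j))).card
      + (n - K) = n := by
    rw [image_tau_card hablt]
    exact hcraw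
  rw [Rsize_eq_D1 hv'' hcard'' (by omega)]
  exact Dseq_image_one hvraw hcraw (by omega) hj rfl hb' (by omega)

lemma Phi_inverse (hK : K + 2 ≤ n) (hj : j ≤ n - K - 1) :
    Phi n K (n - K - 1 - j) (Phi n K j u) = u := by
  have hb' := cfg_ab (u := u) hK hj
  simp only [cfgA, cfgB, cfgD, cfgS, cfgV] at hb'
  have hvraw := cfg_not_mem (u := u) hK
  simp only [cfgS, cfgV] at hvraw
  have hcraw := cfg_card (u := u) hK
  simp only [cfgS] at hcraw
  have hablt := cfg_ab_lt (u := u) hK hj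
  simp only [cfgA, cfgB, cfgD, cfgS, cfgV] at hablt
  funext i
  by_cases hiK : (i : ℕ) < K + 1
  · rw [Phi, if_pos hiK]
    have hPrev : Phi n K j u i = toFin (cfgTau n K j u (((u i : ℕ) : ZMod n))) := by
      rw [Phi, if_pos hiK]
    have hcast : (((Phi n K j u i : ℕ)) : ZMod n) = cfgTau n K j u (((u i : ℕ) : ZMod n)) := by
      rw [hPrev, toFin_cast]
    rw [hcast]
    have hV : cfgV n K (Phi n K j u) = cfgV n K u := spot_Phi hK hj
    have hS : cfgS n K (Phi n K j u) = (cfgS n K u).image (cfgTau n K j u) := occ_Phi hK hj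
    have hA' : cfgA n K (n - K - 1 - j) (Phi n K j u) = cfgB n K j u := by
      rw [cfgA, cfgD, hS, hV]
      simp only [cfgTau, cfgA, cfgB, cfgD, cfgS, cfgV]
      have hcut := Dseq_image_cut hvraw hcraw (by omega) hj rfl hb'
      exact hcut
    have hB' : cfgB n K (n - K - 1 - j) (Phi n K j u) = cfgA n K j u := by
      rw [cfgB, cfgD, cfgD, hS, hV]
      simp only [cfgTau, cfgA, cfgB, cfgD, cfgS, cfgV]
      have hlast := Dseq_image_last hvraw hcraw (by omega) hj rfl hb'
      have hcut := Dseq_image_cut hvraw hcraw (by omega) hj rfl hb'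
      rw [hlast, hcut]
      omega
    rw [cfgTau, hV, hA', hB']
    rw [cfgTau]
    rw [tauMap_left_inv (cfg_ab_lt hK hj)]
    exact toFin_of_cast (u i)
  · rw [Phi, if_neg hiK, Phi, if_neg hiK]

lemma Phi_bijective (hK : K + 2 ≤ n) (hj : j ≤ n - K - 1) :
    Function.Bijective (Phi n K j : (Fin (n - 1) → Fin n) → (Fin (n - 1) → Fin n)) := by
  have hj' : n - K - 1 - j ≤ n - K - 1 := by omega
  have hjj : n - K - 1 - (n - K - 1 - j) = j := by omega
  apply Function.bijective_iff_has_inverse.2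
  refine ⟨Phi n K (n - K - 1 - j), ?_, ?_⟩
  · intro u
    exact Phi_inverse hK hj
  · intro u
    have := Phi_inverse (u := u) hK hj'
    rwa [hjj] at this

end PhiLemmas

section Final
set_option linter.unusedSectionVars false
variable {n K l : ℕ} [NeZero n]

lemma cfgD_mono (hK : K + 2 ≤ n) {u : Fin (n - 1) → Fin n} :
    Monotone (cfgD n K u) := by
  have hne : ∃ q : ZMod n, q ∉ cfgS n K u :=
    exists_not_mem_of_card (by have := cfg_card (u := u) hK; omega)
  exact (Dseq_strictMono hne).monotone

lemma sum_sq_le (hK : K + 2 ≤ n) {u : Fin (n - 1) → Fin n}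
    (hL : Lsize (extend n (n - 1) u) (K + 1) = l) :
    ∑ j ∈ Finset.range (n - K - 1), ((cfgD n K u (j + 1) - cfgD n K u j : ℕ) : ℝ) ^ 2
      ≤ ((n : ℝ) - l) ^ 2 := by
  have hmono := cfgD_mono (u := u) hK
  have hDlt : cfgD n K u (n - K - 1) < n := by
    have hvraw := cfg_not_mem (u := u) hK
    have hcraw := cfg_card (u := u) hK
    exact Dseq_lt_n hvraw hcraw (by omega) (by omega)
  have hLval : n - cfgD n K u (n - K - 1) = l := by
    rw [← Lsize_val hK, hL]
  have hcastD : (cfgD n K u (n - K - 1) : ℝ) = (n : ℝ) - l := by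
    have h1 : cfgD n K u (n - K - 1) + l = n := by omega
    have := congrArg (Nat.cast : ℕ → ℝ) h1
    push_cast at this
    linarith
  set Sg := ∑ j ∈ Finset.range (n - K - 1), ((cfgD n K u (j + 1) - cfgD n K u j : ℕ) : ℝ)
    with hSg
  have hsum_tele : Sg = (cfgD n K u (n - K - 1) : ℝ) := by
    rw [hSg]
    have hterm : ∀ j, ((cfgD n K u (j + 1) - cfgD n K u j : ℕ) : ℝ)
        = ((cfgD n K u (j + 1) : ℕ) : ℝ) - ((cfgD n K u j : ℕ) : ℝ) := by
      intro j
      exact_mod_cast Nat.cast_sub (hmono (by omega))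
    rw [Finset.sum_congr rfl (fun j _ => hterm j)]
    rw [Finset.sum_range_sub (fun j => ((cfgD n K u j : ℕ) : ℝ))]
    have h0 : cfgD n K u 0 = 0 := Dseq_zero
    rw [h0]
    simp
  have hnn : ∀ j ∈ Finset.range (n - K - 1),
      (0 : ℝ) ≤ ((cfgD n K u (j + 1) - cfgD n K u j : ℕ) : ℝ) :=
    fun j _ => Nat.cast_nonneg _
  have hle : ∀ j ∈ Finset.range (n - K - 1),
      ((cfgD n K u (j + 1) - cfgD n K u j : ℕ) : ℝ) ^ 2
        ≤ ((cfgD n K u (j + 1) - cfgD n K u j : ℕ) : ℝ) * Sg := by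
    intro j hj
    have hsingle : ((cfgD n K u (j + 1) - cfgD n K u j : ℕ) : ℝ) ≤ Sg :=
      Finset.single_le_sum hnn hj
    rw [sq]
    exact mul_le_mul_of_nonneg_left hsingle (Nat.cast_nonneg _)
  calc ∑ j ∈ Finset.range (n - K - 1), ((cfgD n K u (j + 1) - cfgD n K u j : ℕ) : ℝ) ^ 2
      ≤ ∑ j ∈ Finset.range (n - K - 1), ((cfgD n K u (j + 1) - cfgD n K u j : ℕ) : ℝ) * Sg :=
        Finset.sum_le_sum hle
    _ = Sg * Sg := by rw [← Finset.sum_mul]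
    _ = ((n : ℝ) - l) ^ 2 := by rw [hsum_tele, hcastD, sq]

end Final


/-- `E[R_{k,n}² | L_{k,n}] ≤ (n - L_{k,n})²/(n - k)`, i.e. for every `l`,
`E[R_{k,n}² · 1_{L_{k,n} = l}] ≤ ((n - l)²/(n - k)) · P(L_{k,n} = l)`. -/
theorem cond_second_moment_R_given_L (n k : ℕ) (hk1 : 1 ≤ k) (hk2 : k ≤ n - 1) (l : ℕ) :
    expect n (n - 1) (fun t => (Rsize t k : ℝ) ^ 2 * (if Lsize t k = l then 1 else 0))
      ≤ (((n : ℝ) - l) ^ 2 / ((n : ℝ) - k)) * prob n (n - 1) (fun t => Lsize t k = l) := by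
  have hn2 : 2 ≤ n := by omega
  haveI : NeZero n := ⟨by omega⟩
  obtain ⟨K, rfl⟩ : ∃ K, k = K + 1 := ⟨k - 1, by omega⟩
  have hK : K + 2 ≤ n := by omega
  set f : (Fin (n - 1) → Fin n) → ℝ := fun u =>
    (Rsize (extend n (n - 1) u) (K + 1) : ℝ) ^ 2 *
      (if Lsize (extend n (n - 1) u) (K + 1) = l then 1 else 0) with hf
  set ind : (Fin (n - 1) → Fin n) → ℝ := fun u =>
    (if Lsize (extend n (n - 1) u) (K + 1) = l then (1:ℝ) else 0) with hind
  have hchain : ((n - K - 1 : ℕ) : ℝ) * (∑ u : Fin (n-1) → Fin n, f u)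
      ≤ ((n : ℝ) - l) ^ 2 * (∑ u : Fin (n-1) → Fin n, ind u) := by
    have hstep1 : ∀ j ∈ Finset.range (n - K - 1),
        (∑ u : Fin (n-1) → Fin n, f u) = ∑ u : Fin (n-1) → Fin n, f (Phi n K j u) := by
      intro j hj
      rw [Finset.mem_range] at hj
      exact (Function.Bijective.sum_comp (Phi_bijective hK (by omega)) f).symm
    have hfPhi : ∀ j ∈ Finset.range (n - K - 1), ∀ u : Fin (n-1) → Fin n,
        f (Phi n K j u) = ((cfgD n K u (j + 1) - cfgD n K u j : ℕ) : ℝ) ^ 2 * ind u := by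
      intro j hj u
      rw [Finset.mem_range] at hj
      rw [hf]
      simp only
      rw [Rsize_Phi hK hj, Lsize_Phi hK (by omega), hind]
    calc ((n - K - 1 : ℕ) : ℝ) * (∑ u : Fin (n-1) → Fin n, f u)
        = ∑ _j ∈ Finset.range (n - K - 1), (∑ u : Fin (n-1) → Fin n, f u) := by
          rw [Finset.sum_const, Finset.card_range, nsmul_eq_mul]
      _ = ∑ j ∈ Finset.range (n - K - 1), ∑ u : Fin (n-1) → Fin n, f (Phi n K j u) :=
          Finset.sum_congr rfl hstep1
      _ = ∑ j ∈ Finset.range (n - K - 1), ∑ u : Fin (n-1) → Fin n,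
            ((cfgD n K u (j + 1) - cfgD n K u j : ℕ) : ℝ) ^ 2 * ind u :=
          Finset.sum_congr rfl (fun j hj => Finset.sum_congr rfl (fun u _ => hfPhi j hj u))
      _ = ∑ u : Fin (n-1) → Fin n, ∑ j ∈ Finset.range (n - K - 1),
            ((cfgD n K u (j + 1) - cfgD n K u j : ℕ) : ℝ) ^ 2 * ind u := Finset.sum_comm
      _ = ∑ u : Fin (n-1) → Fin n,
            (∑ j ∈ Finset.range (n - K - 1),
              ((cfgD n K u (j + 1) - cfgD n K u j : ℕ) : ℝ) ^ 2) * ind u :=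
          Finset.sum_congr rfl (fun u _ => (Finset.sum_mul _ _ _).symm)
      _ ≤ ∑ u : Fin (n-1) → Fin n, ((n : ℝ) - l) ^ 2 * ind u := by
          apply Finset.sum_le_sum
          intro u _
          by_cases hL : Lsize (extend n (n - 1) u) (K + 1) = l
          · have hind1 : ind u = 1 := by rw [hind]; simp only [if_pos hL]
            rw [hind1, mul_one, mul_one]
            exact sum_sq_le hK hL
          · have hind0 : ind u = 0 := by rw [hind]; simp only [if_neg hL]
            rw [hind0, mul_zero, mul_zero]
      _ = ((n : ℝ) - l) ^ 2 * (∑ u : Fin (n-1) → Fin n, ind u) := by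
          rw [Finset.mul_sum]
  -- now pass to expectations
  have hNpos : (0 : ℝ) < (n : ℝ) ^ (n - 1) := by positivity
  have hcast2 : ((K + 1 : ℕ) : ℝ) = (K : ℝ) + 1 := by push_cast; ring
  have hDpos : (0 : ℝ) < (n : ℝ) - ((K + 1 : ℕ) : ℝ) := by
    have h1 : ((K : ℝ) + 2) ≤ (n : ℝ) := by exact_mod_cast hK
    rw [hcast2]
    linarith
  have hDeq : ((n - K - 1 : ℕ) : ℝ) = (n : ℝ) - ((K + 1 : ℕ) : ℝ) := by
    have h1 : (n - K - 1 : ℕ) + (K + 1) = n := by omega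
    have h2 := congrArg (Nat.cast : ℕ → ℝ) h1
    push_cast at h2
    rw [hcast2]
    linarith
  have h1 : (∑ u : Fin (n-1) → Fin n, f u)
      ≤ (((n : ℝ) - l) ^ 2 / ((n : ℝ) - ((K + 1 : ℕ) : ℝ)))
          * (∑ u : Fin (n-1) → Fin n, ind u) := by
    rw [div_mul_eq_mul_div, le_div_iff₀ hDpos]
    calc (∑ u : Fin (n-1) → Fin n, f u) * ((n : ℝ) - ((K + 1 : ℕ) : ℝ))
        = ((n - K - 1 : ℕ) : ℝ) * (∑ u : Fin (n-1) → Fin n, f u) := by rw [hDeq]; ring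
      _ ≤ ((n : ℝ) - l) ^ 2 * (∑ u : Fin (n-1) → Fin n, ind u) := hchain
  have hfinal : (∑ u : Fin (n-1) → Fin n, f u) / (n : ℝ) ^ (n - 1)
      ≤ (((n : ℝ) - l) ^ 2 / ((n : ℝ) - ((K + 1 : ℕ) : ℝ)))
          * ((∑ u : Fin (n-1) → Fin n, ind u) / (n : ℝ) ^ (n - 1)) := by
    have h2 : (((n : ℝ) - l) ^ 2 / ((n : ℝ) - ((K + 1 : ℕ) : ℝ)))
        * ((∑ u : Fin (n-1) → Fin n, ind u) / (n : ℝ) ^ (n - 1))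
        = ((((n : ℝ) - l) ^ 2 / ((n : ℝ) - ((K + 1 : ℕ) : ℝ)))
            * (∑ u : Fin (n-1) → Fin n, ind u)) / (n : ℝ) ^ (n - 1) := by
      ring
    rw [h2]
    apply div_le_div_of_nonneg_right h1 hNpos.le
  have e1 : expect n (n-1) (fun t => (Rsize t (K+1) : ℝ)^2 * (if Lsize t (K+1) = l then 1 else 0))
      = (∑ u : Fin (n-1) → Fin n, f u) / (n:ℝ)^(n-1) := rfl
  have e2 : prob n (n-1) (fun t => Lsize t (K+1) = l)
      = (∑ u : Fin (n-1) → Fin n, ind u) / (n:ℝ)^(n-1) := by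
    rw [prob, expect]
    congr 1
    apply Finset.sum_congr rfl
    intro t _
    simp only [hind]
    congr 1
  rw [e1, e2]
  exact hfinal


end Parking
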